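/- Let R = ℤ/2 × S where S is a finite commutative local ring whose zero-divisor graph has at least 3 vertices. Then Γ(R) contains both a triangle K_3 and the complete bipartite graph K_{2,3} as subgraphs: there exist three distinct nonzero zero-divisors a, b, c ∈ S with ab = ac = 0, and then u_1 = (0,b), u_2 = (0,c), v_1 = (1,0), v_2 = (0,a), v_3 = (1,a) form the required configuration. -/

import Mathlib

open SimpleGraph Function

/-- The zero-divisor graph of a commutative ring, defined on the whole ring
(elements that are not nonzero zero-divisors are isolated vertices). -/
def zdg (R : Type*) [CommRing R] : SimpleGraph R where
  Adj x y := x ≠ y ∧ x ≠ 0 ∧ y ≠ 0 ∧ x * y = 0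
  symm := by
    constructor
    rintro x y ⟨h1, h2, h3, h4⟩
    exact ⟨fun e => h1 e.symm, h3, h2, by rwa [mul_comm]⟩
  loopless := by constructor; rintro x ⟨h1, _⟩; exact h1 rfl

/-- If `R = ℤ/2 × S` where `S` is a finite local ring with at least `3` nonzero
zero-divisors, then there are three distinct nonzero zero-divisors `a, b, c ∈ S` with
`ab = ac = 0`; the vertices `u₁ = (0,b)`, `u₂ = (0,c)`, `v₁ = (1,0)`, `v₂ = (0,a)`,
`v₃ = (1,a)` give a `K_{2,3}` in `Γ(ℤ/2 × S)`, and `Γ(ℤ/2 × S)` also contains a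
triangle `K₃`. -/
theorem stmt_9 (S : Type*) [CommRing S] [IsLocalRing S] [Finite S]
    (h3 : 3 ≤ Nat.card {x : S | x ≠ 0 ∧ ∃ y, y ≠ 0 ∧ x * y = 0}) :
    (∃ a b c : S,
      a ≠ b ∧ a ≠ c ∧ b ≠ c ∧
      a ≠ 0 ∧ b ≠ 0 ∧ c ≠ 0 ∧
      (∃ y, y ≠ 0 ∧ a * y = 0) ∧ (∃ y, y ≠ 0 ∧ b * y = 0) ∧
      (∃ y, y ≠ 0 ∧ c * y = 0) ∧
      a * b = 0 ∧ a * c = 0 ∧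
      (∀ u ∈ ({((0 : ZMod 2), b), ((0 : ZMod 2), c)} : Set (ZMod 2 × S)),
        ∀ v ∈ ({((1 : ZMod 2), (0 : S)), ((0 : ZMod 2), a), ((1 : ZMod 2), a)} :
            Set (ZMod 2 × S)),
          (zdg (ZMod 2 × S)).Adj u v)) ∧
    (∃ f : completeGraph (Fin 3) →g zdg (ZMod 2 × S), Injective f) ∧
    (∃ g : completeBipartiteGraph (Fin 2) (Fin 3) →g zdg (ZMod 2 × S), Injective g) := by
  classical
  set T : Set S := {x : S | x ≠ 0 ∧ ∃ y, y ≠ 0 ∧ x * y = 0} with hTdef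
  set m := IsLocalRing.maximalIdeal S with hmdef
  have hTm : ∀ x ∈ T, x ∈ m := by
    rintro x ⟨hx0, y, hy0, hxy⟩
    rw [hmdef, IsLocalRing.mem_maximalIdeal]
    intro hu
    exact hy0 ((hu.mul_right_eq_zero).mp hxy)
  -- m is nilpotent
  obtain ⟨n, hn⟩ := IsArtinianRing.isNilpotent_jacobson_bot (R := S)
  rw [IsLocalRing.jacobson_eq_maximalIdeal ⊥ bot_ne_top] at hn
  have hex : ∃ k, m ^ k = ⊥ := ⟨n, by simpa using hn⟩
  -- T is nonempty, so m ≠ ⊥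
  have hpos : 0 < Nat.card T := by omega
  obtain ⟨⟨x, hx⟩⟩ := (Nat.card_pos_iff.mp hpos).1
  have hmne : m ≠ ⊥ := fun h => hx.1 (by
    have := hTm x hx; rw [h] at this; exact (Submodule.mem_bot S).mp this)
  obtain ⟨k, hk2, hk, hkm1⟩ : ∃ k, 2 ≤ k ∧ m ^ k = ⊥ ∧ m ^ (k - 1) ≠ ⊥ := by
    refine ⟨Nat.find hex, ?_, Nat.find_spec hex, Nat.find_min hex ?_⟩
    · by_contra h
      push_neg at h
      have hk := Nat.find_spec hex
      interval_cases h' : (Nat.find hex)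
      · rw [pow_zero, Ideal.one_eq_top] at hk
        exact one_ne_zero ((Submodule.mem_bot S).mp (hk ▸ (Submodule.mem_top : (1:S) ∈ ⊤)))
      · rw [pow_one] at hk; exact hmne hk
    · have : Nat.find hex ≠ 0 := by
        intro h0
        have hk := Nat.find_spec hex
        rw [h0, pow_zero, Ideal.one_eq_top] at hk
        exact one_ne_zero ((Submodule.mem_bot S).mp (hk ▸ (Submodule.mem_top : (1:S) ∈ ⊤)))
      omega
  obtain ⟨a, haM, ha0⟩ := (Submodule.ne_bot_iff _).mp hkm1
  have hann : ∀ x ∈ m, a * x = 0 := by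
    intro x hx
    have h1 : a * x ∈ m ^ (k - 1) * m := Ideal.mul_mem_mul haM hx
    rw [← pow_succ, Nat.sub_add_cancel (by omega), hk] at h1
    exact (Submodule.mem_bot S).mp h1
  -- pick b c in T \ {a}
  have hTfin : T.Finite := Set.toFinite T
  have hcard : 3 ≤ T.ncard := by rwa [← Nat.card_coe_set_eq]
  have h2 : 1 < (T \ {a}).ncard := by
    by_cases haT : a ∈ T
    · have := Set.ncard_diff_singleton_add_one haT hTfin; omega
    · rw [Set.diff_singleton_eq_self haT]; omega
  obtain ⟨b, c, hbT, hcT, hbc⟩ := (Set.one_lt_ncard_iff (hTfin.diff)).mp h2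
  obtain ⟨hbT, hba⟩ := hbT
  obtain ⟨hcT, hca⟩ := hcT
  rw [Set.mem_singleton_iff] at hba hca
  have hb0 : b ≠ 0 := hbT.1
  have hc0 : c ≠ 0 := hcT.1
  have hab : a * b = 0 := hann b (hTm b hbT)
  have hac : a * c = 0 := hann c (hTm c hcT)
  have hba' : b * a = 0 := by rwa [mul_comm]
  have hca' : c * a = 0 := by rwa [mul_comm]
  have hone : (1 : ZMod 2) ≠ 0 := one_ne_zero
  clear hk hkm1 hex hmne hann hTm hpos hcard h2 h3 haM hk2 hTfin hx
  -- adjacency facts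
  have A1 : (zdg (ZMod 2 × S)).Adj (0, b) (1, 0) :=
    ⟨by simp [Prod.ext_iff], by simp [Prod.ext_iff, hb0], by simp [Prod.ext_iff],
      by simp [Prod.mk_mul_mk, Prod.ext_iff]⟩
  have A2 : (zdg (ZMod 2 × S)).Adj (0, b) (0, a) :=
    ⟨by simp [Prod.ext_iff, hba], by simp [Prod.ext_iff, hb0],
      by simp [Prod.ext_iff, ha0], by simp [Prod.mk_mul_mk, Prod.ext_iff, hba']⟩
  have A3 : (zdg (ZMod 2 × S)).Adj (0, b) (1, a) :=
    ⟨by simp [Prod.ext_iff], by simp [Prod.ext_iff, hb0], by simp [Prod.ext_iff],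
      by simp [Prod.mk_mul_mk, Prod.ext_iff, hba']⟩
  have A4 : (zdg (ZMod 2 × S)).Adj (0, c) (1, 0) :=
    ⟨by simp [Prod.ext_iff], by simp [Prod.ext_iff, hc0], by simp [Prod.ext_iff],
      by simp [Prod.mk_mul_mk, Prod.ext_iff]⟩
  have A5 : (zdg (ZMod 2 × S)).Adj (0, c) (0, a) :=
    ⟨by simp [Prod.ext_iff, hca], by simp [Prod.ext_iff, hc0],
      by simp [Prod.ext_iff, ha0], by simp [Prod.mk_mul_mk, Prod.ext_iff, hca']⟩
  have A6 : (zdg (ZMod 2 × S)).Adj (0, c) (1, a) :=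
    ⟨by simp [Prod.ext_iff], by simp [Prod.ext_iff, hc0], by simp [Prod.ext_iff],
      by simp [Prod.mk_mul_mk, Prod.ext_iff, hca']⟩
  have A7 : (zdg (ZMod 2 × S)).Adj (1, 0) (0, a) :=
    ⟨by simp [Prod.ext_iff], by simp [Prod.ext_iff], by simp [Prod.ext_iff, ha0],
      by simp [Prod.mk_mul_mk, Prod.ext_iff]⟩
  have hab' : a ≠ b := Ne.symm hba
  have hac' : a ≠ c := Ne.symm hca
  have hcb : c ≠ b := Ne.symm hbc
  have ha0' : (0 : S) ≠ a := Ne.symm ha0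
  refine ⟨⟨a, b, c, Ne.symm hba, Ne.symm hca, hbc, ha0, hb0, hc0,
    ⟨b, hb0, hab⟩, hbT.2, hcT.2, hab, hac, ?_⟩, ?_, ?_⟩
  · intro u hu v hv
    simp only [Set.mem_insert_iff, Set.mem_singleton_iff] at hu hv
    rcases hu with rfl | rfl <;> rcases hv with rfl | rfl | rfl
    exacts [A1, A2, A3, A4, A5, A6]
  · refine ⟨⟨![(1, 0), (0, a), (0, b)], ?_⟩, ?_⟩
    · intro i j hij
      fin_cases i <;> fin_cases j <;>
        first
        | exact absurd rfl hij
        | exact A7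
        | exact A7.symm
        | exact A1.symm
        | exact A1
        | exact A2
        | exact A2.symm
    · intro i j h
      have h' : (![((1 : ZMod 2), (0 : S)), (0, a), (0, b)]) i
          = (![((1 : ZMod 2), (0 : S)), (0, a), (0, b)]) j := h
      clear h
      fin_cases i <;> fin_cases j <;>
        first
        | rfl
        | simp [Prod.ext_iff, hab', hba, ha0, ha0', hb0, hbc, hcb] at h'
  · refine ⟨⟨Sum.elim ![(0, b), (0, c)] ![(1, 0), (0, a), (1, a)], ?_⟩, ?_⟩
    · rintro (i | i) (j | j) h
      · simp [completeBipartiteGraph] at h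
      · fin_cases i <;> fin_cases j
        exacts [A1, A2, A3, A4, A5, A6]
      · fin_cases i <;> fin_cases j
        exacts [A1.symm, A4.symm, A2.symm, A5.symm, A3.symm, A6.symm]
      · simp [completeBipartiteGraph] at h
    · have key : ∀ x y, Sum.elim (![((0 : ZMod 2), b), (0, c)])
          (![((1 : ZMod 2), (0 : S)), (0, a), (1, a)]) x
          = Sum.elim (![((0 : ZMod 2), b), (0, c)])
          (![((1 : ZMod 2), (0 : S)), (0, a), (1, a)]) y → x = y := by
        rintro (i | i) (j | j) h' <;> fin_cases i <;> fin_cases j <;>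
          first
          | rfl
          | simp [Prod.ext_iff, hab', hac', hba, hca, ha0, ha0', hb0, hc0, hbc, hcb] at h'
      exact fun x y h => key x y h
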